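/- Let τ be the ℚ-algebra automorphism of the polynomial ring ℚ[v₁, v₂, v₃, v₄] determined by τ(v₁) = v₂, τ(v₂) = v₁, τ(v₃) = v₄, τ(v₄) = v₃. Then the subalgebra of τ-invariant polynomials equals the ℚ-subalgebra generated by the five elements u₁ = v₁ + v₂, u₂ = v₃ + v₄, u₃ = v₁² + v₂², u₄ = v₃² + v₄², and u₅ = v₁v₄ + v₂v₃. -/
import Mathlib


open MvPolynomial

/-- The permutation `(v₁ v₂)(v₃ v₄)` of the variables of `ℚ[v₁, v₂, v₃, v₄]`
(with `v₁ = X 0`, `v₂ = X 1`, `v₃ = X 2`, `v₄ = X 3`). -/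
def perm : Equiv.Perm (Fin 4) := (Equiv.swap 0 1).trans (Equiv.swap 2 3)

noncomputable section Aux

private abbrev Rng : Type := MvPolynomial (Fin 4) ℚ

private def Asub : Subalgebra ℚ Rng :=
  Algebra.adjoin ℚ ({X 0 + X 1, X 2 + X 3, X 0 ^ 2 + X 1 ^ 2, X 2 ^ 2 + X 3 ^ 2,
    X 0 * X 3 + X 1 * X 2} : Set Rng)

private lemma perm0 : perm 0 = 1 := rfl
private lemma perm1 : perm 1 = 0 := rfl
private lemma perm2 : perm 2 = 3 := rfl
private lemma perm3 : perm 3 = 2 := rfl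

private lemma e1_mem : (X 0 + X 1 : Rng) ∈ Asub := Algebra.subset_adjoin (by simp)
private lemma e2_mem : (X 2 + X 3 : Rng) ∈ Asub := Algebra.subset_adjoin (by simp)
private lemma sq1_mem : (X 0 ^ 2 + X 1 ^ 2 : Rng) ∈ Asub := Algebra.subset_adjoin (by simp)
private lemma sq2_mem : (X 2 ^ 2 + X 3 ^ 2 : Rng) ∈ Asub := Algebra.subset_adjoin (by simp)
private lemma s_mem : (X 0 * X 3 + X 1 * X 2 : Rng) ∈ Asub := Algebra.subset_adjoin (by simp)

private lemma p_mem : (X 0 * X 1 : Rng) ∈ Asub := by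
  have h : (X 0 * X 1 : Rng)
      = (1/2 : ℚ) • ((X 0 + X 1) ^ 2 - (X 0 ^ 2 + X 1 ^ 2)) := by
    rw [MvPolynomial.smul_eq_C_mul]
    have : (C (1/2 : ℚ) : Rng) * 2 = 1 := by
      rw [← map_ofNat (C : ℚ →+* Rng) 2, ← map_mul]; norm_num
    linear_combination (X 0 * X 1 : Rng) * this.symm
  rw [h]
  exact Asub.smul_mem (Asub.sub_mem (Asub.pow_mem e1_mem 2) sq1_mem) _

private lemma q_mem : (X 2 * X 3 : Rng) ∈ Asub := by
  have h : (X 2 * X 3 : Rng)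
      = (1/2 : ℚ) • ((X 2 + X 3) ^ 2 - (X 2 ^ 2 + X 3 ^ 2)) := by
    rw [MvPolynomial.smul_eq_C_mul]
    have : (C (1/2 : ℚ) : Rng) * 2 = 1 := by
      rw [← map_ofNat (C : ℚ →+* Rng) 2, ← map_mul]; norm_num
    linear_combination (X 2 * X 3 : Rng) * this.symm
  rw [h]
  exact Asub.smul_mem (Asub.sub_mem (Asub.pow_mem e2_mem 2) sq2_mem) _

/-- Every polynomial can be written `a + b·X0 + c·X2 + d·X0·X2` with `a,b,c,d ∈ Asub`. -/
private lemma repr_lemma (P : Rng) : ∃ a b c d : Rng, a ∈ Asub ∧ b ∈ Asub ∧ c ∈ Asub ∧ d ∈ Asub ∧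
    P = a + b * X 0 + c * X 2 + d * (X 0 * X 2) := by
  induction P using MvPolynomial.induction_on with
  | C r =>
      exact ⟨C r, 0, 0, 0, by simpa using Asub.algebraMap_mem r,
        Asub.zero_mem, Asub.zero_mem, Asub.zero_mem, by ring⟩
  | add p q hp hq =>
      obtain ⟨a, b, c, d, ha, hb, hc, hd, h⟩ := hp
      obtain ⟨a', b', c', d', ha', hb', hc', hd', h'⟩ := hq
      exact ⟨a + a', b + b', c + c', d + d', Asub.add_mem ha ha', Asub.add_mem hb hb',
        Asub.add_mem hc hc', Asub.add_mem hd hd', by rw [h, h']; ring⟩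
  | mul_X p n hp =>
      obtain ⟨a, b, c, d, ha, hb, hc, hd, h⟩ := hp
      fin_cases n
      · exact ⟨-(b * (X 0 * X 1)), a + b * (X 0 + X 1), -(d * (X 0 * X 1)),
          c + d * (X 0 + X 1),
          Asub.neg_mem (Asub.mul_mem hb p_mem),
          Asub.add_mem ha (Asub.mul_mem hb e1_mem),
          Asub.neg_mem (Asub.mul_mem hd p_mem),
          Asub.add_mem hc (Asub.mul_mem hd e1_mem), by show p * X 0 = _; rw [h]; ring⟩
      · exact ⟨a * (X 0 + X 1) + b * (X 0 * X 1), -a,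
          c * (X 0 + X 1) + d * (X 0 * X 1), -c,
          Asub.add_mem (Asub.mul_mem ha e1_mem) (Asub.mul_mem hb p_mem),
          Asub.neg_mem ha,
          Asub.add_mem (Asub.mul_mem hc e1_mem) (Asub.mul_mem hd p_mem),
          Asub.neg_mem hc, by show p * X 1 = _; rw [h]; ring⟩
      · exact ⟨-(c * (X 2 * X 3)), -(d * (X 2 * X 3)),
          a + c * (X 2 + X 3), b + d * (X 2 + X 3),
          Asub.neg_mem (Asub.mul_mem hc q_mem),
          Asub.neg_mem (Asub.mul_mem hd q_mem),
          Asub.add_mem ha (Asub.mul_mem hc e2_mem),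
          Asub.add_mem hb (Asub.mul_mem hd e2_mem), by show p * X 2 = _; rw [h]; ring⟩
      · exact ⟨a * (X 2 + X 3) + c * (X 2 * X 3), b * (X 2 + X 3) + d * (X 2 * X 3),
          -a, -b,
          Asub.add_mem (Asub.mul_mem ha e2_mem) (Asub.mul_mem hc q_mem),
          Asub.add_mem (Asub.mul_mem hb e2_mem) (Asub.mul_mem hd q_mem),
          Asub.neg_mem ha, Asub.neg_mem hb, by show p * X 3 = _; rw [h]; ring⟩

private lemma tau_fix : ∀ p ∈ Asub, (renameEquiv ℚ perm) p = p := by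
  intro p hp
  induction hp using Algebra.adjoin_induction with
  | mem x hx =>
      simp only [Set.mem_insert_iff, Set.mem_singleton_iff] at hx
      rcases hx with h | h | h | h | h <;> subst h <;>
        simp [renameEquiv_apply, rename_X, perm0, perm1, perm2, perm3, add_comm, mul_comm]
  | algebraMap r => simp [algebraMap_eq]
  | add x y _ _ hx hy => rw [map_add, hx, hy]
  | mul x y _ _ hx hy => rw [map_mul, hx, hy]

end Aux

/-- Let `τ` be the ℚ-algebra automorphism of `ℚ[v₁, v₂, v₃, v₄]` with `τ(v₁) = v₂`,
`τ(v₂) = v₁`, `τ(v₃) = v₄`, `τ(v₄) = v₃`.  The subalgebra of `τ`-invariant polynomials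
is generated over ℚ by `u₁ = v₁ + v₂`, `u₂ = v₃ + v₄`, `u₃ = v₁² + v₂²`,
`u₄ = v₃² + v₄²` and `u₅ = v₁v₄ + v₂v₃`. -/
theorem stmt12 :
    ∀ P : MvPolynomial (Fin 4) ℚ,
      (renameEquiv ℚ perm) P = P ↔
        P ∈ Algebra.adjoin ℚ
          ({X 0 + X 1, X 2 + X 3, X 0 ^ 2 + X 1 ^ 2, X 2 ^ 2 + X 3 ^ 2,
            X 0 * X 3 + X 1 * X 2} : Set (MvPolynomial (Fin 4) ℚ)) := by
  intro P
  constructor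
  · intro hP
    show P ∈ Asub
    obtain ⟨a, b, c, d, ha, hb, hc, hd, h⟩ := repr_lemma P
    set e1 : Rng := X 0 + X 1 with he1
    set e2 : Rng := X 2 + X 3 with he2
    set s : Rng := X 0 * X 3 + X 1 * X 2 with hs
    have hτ : (renameEquiv ℚ perm) P = a + b * X 1 + c * X 3 + d * (X 1 * X 3) := by
      rw [h]
      rw [map_add, map_add, map_add, map_mul, map_mul, map_mul, map_mul,
        tau_fix a ha, tau_fix b hb, tau_fix c hc, tau_fix d hd]
      simp [renameEquiv_apply, rename_X, perm0, perm2]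
    have key : P + P = (a + a) + b * e1 + c * e2 + d * (e1 * e2 - s) := by
      nth_rewrite 2 [← hP]
      rw [hτ]
      nth_rewrite 1 [h]
      rw [he1, he2, hs]; ring
    have hE : (a + a) + b * e1 + c * e2 + d * (e1 * e2 - s) ∈ Asub :=
      Asub.add_mem (Asub.add_mem (Asub.add_mem (Asub.add_mem ha ha)
        (Asub.mul_mem hb e1_mem)) (Asub.mul_mem hc e2_mem))
        (Asub.mul_mem hd (Asub.sub_mem (Asub.mul_mem e1_mem e2_mem) s_mem))
    have hP2 : P = (1/2 : ℚ) • ((a + a) + b * e1 + c * e2 + d * (e1 * e2 - s)) := by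
      rw [← key, smul_add, ← add_smul]; norm_num
    rw [hP2]
    exact Asub.smul_mem hE _
  · intro hP
    exact tau_fix P hP
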